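/- Let X be a metric space, A ⊆ X closed, a > b ≥ 1 and c > 0 real numbers, and let f be a TW-function of type (a,b,c) centered at A. Then f : X → ℝ is continuous and satisfies 0 ≤ f(x) ≤ a/(a−b) for all x ∈ X. -/

import Mathlib

open Metric Set Topology Filter

/-- A set `S` in a metric space is `ε`-separated if any two distinct points of
`S` are at distance at least `ε`. -/
def IsEpsSeparated {X : Type*} [MetricSpace X] (ε : ℝ) (S : Set X) : Prop :=
  ∀ s ∈ S, ∀ t ∈ S, s ≠ t → ε ≤ dist s t

/-- `S` is a maximal `ε`-separated subset of `Y`: `S ⊆ Y`, `S` is `ε`-separated,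
and any `ε`-separated set `T` with `S ⊆ T ⊆ Y` equals `S`. -/
def IsMaxEpsSeparatedIn {X : Type*} [MetricSpace X] (ε : ℝ) (Y S : Set X) : Prop :=
  S ⊆ Y ∧ IsEpsSeparated ε S ∧
    ∀ T : Set X, T ⊆ Y → IsEpsSeparated ε T → S ⊆ T → T = S

/-- A TW-function `f(x) = Σ_{n} bⁿ·d(x,T_n)` of type `(a,b,c)` centered at a
closed set `A` is continuous and satisfies `0 ≤ f(x) ≤ a/(a−b)`. -/
theorem TW_continuous_and_bounded {X : Type*} [MetricSpace X] (A : Set X) (hA : IsClosed A)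
    (a b c : ℝ) (hab : b < a) (hb : 1 ≤ b) (hc : 0 < c)
    (G S T : ℕ → Set X)
    (hG : ∀ n, G n = {x : X | Metric.infDist x A < c / a ^ n})
    (hS : ∀ n, IsMaxEpsSeparatedIn (1 / a ^ n) (G n) (S n))
    (hT : ∀ n, T n = (G n)ᶜ ∪ S n)
    (f : X → ℝ) (hf : ∀ x, f x = ∑' n : ℕ, b ^ n * Metric.infDist x (T n)) :
    Continuous f ∧ ∀ x : X, 0 ≤ f x ∧ f x ≤ a / (a - b) := by
  have hb0 : (0:ℝ) < b := lt_of_lt_of_le one_pos hb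
  have ha : (0:ℝ) < a := hb0.trans hab
  have hr0 : (0:ℝ) ≤ b / a := by positivity
  have hr1 : b / a < 1 := (div_lt_one ha).mpr hab
  -- key bound: infDist x (T n) ≤ 1 / a ^ n
  have hkey : ∀ n x, infDist x (T n) ≤ 1 / a ^ n := by
    intro n x
    have hpow : (0:ℝ) < a ^ n := pow_pos ha n
    by_cases hx : x ∈ G n
    · by_cases hsx : ∃ s ∈ S n, dist x s ≤ 1 / a ^ n
      · obtain ⟨s, hsS, hd⟩ := hsx
        have hsT : s ∈ T n := by rw [hT]; exact Or.inr hsS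
        exact le_trans (infDist_le_dist_of_mem hsT) hd
      · push_neg at hsx
        obtain ⟨hSsub, hSsep, hmax⟩ := hS n
        have hsep : IsEpsSeparated (1 / a ^ n) (S n ∪ {x}) := by
          intro u hu v hv huv
          rcases hu with hu | hu
          · rcases hv with hv | hv
            · exact hSsep u hu v hv huv
            · rcases hv with rfl
              rw [dist_comm]
              exact (hsx u hu).le
          · rcases hu with rfl
            rcases hv with hv | hv
            · exact (hsx v hv).le
            · rcases hv with rfl; exact absurd rfl huv
        have hsub : S n ∪ {x} ⊆ G n := by
          intro y hy
          rcases hy with hy | hy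
          · exact hSsub hy
          · rcases hy with rfl; exact hx
        have heq := hmax (S n ∪ {x}) hsub hsep subset_union_left
        have hxS : x ∈ S n := by
          rw [← heq]; exact Or.inr rfl
        have hxT : x ∈ T n := by rw [hT]; exact Or.inr hxS
        rw [infDist_zero_of_mem hxT]
        positivity
    · have hxT : x ∈ T n := by rw [hT]; exact Or.inl hx
      rw [infDist_zero_of_mem hxT]
      positivity
  have hterm : ∀ n x, b ^ n * infDist x (T n) ≤ (b / a) ^ n := by
    intro n x
    have := mul_le_mul_of_nonneg_left (hkey n x) (le_of_lt (pow_pos hb0 n))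
    calc b ^ n * infDist x (T n) ≤ b ^ n * (1 / a ^ n) := this
      _ = (b / a) ^ n := by rw [div_pow]; ring
  have hgeom : Summable fun n : ℕ => (b / a) ^ n := summable_geometric_of_lt_one hr0 hr1
  have hnonneg : ∀ n x, 0 ≤ b ^ n * infDist x (T n) := fun n x => by
    have := infDist_nonneg (x := x) (s := T n)
    positivity
  have hsum : ∀ x, Summable fun n : ℕ => b ^ n * infDist x (T n) := fun x =>
    Summable.of_nonneg_of_le (fun n => hnonneg n x) (fun n => hterm n x) hgeom
  constructor
  · have : Continuous fun x => ∑' n : ℕ, b ^ n * Metric.infDist x (T n) := by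
      apply continuous_tsum (fun n => (continuous_const.mul (continuous_infDist_pt (T n)))) hgeom
      intro n x
      simp only [Pi.mul_apply]
      rw [Real.norm_eq_abs, abs_of_nonneg (hnonneg n x)]
      exact hterm n x
    have hfe : f = fun x => ∑' n : ℕ, b ^ n * Metric.infDist x (T n) := funext hf
    rw [hfe]; exact this
  · intro x
    rw [hf x]
    constructor
    · exact tsum_nonneg (fun n => hnonneg n x)
    · have h1 : ∑' n : ℕ, b ^ n * Metric.infDist x (T n) ≤ ∑' n : ℕ, (b / a) ^ n :=
        (hsum x).tsum_le_tsum (fun n => hterm n x) hgeom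
      have h2 : ∑' n : ℕ, (b / a) ^ n = a / (a - b) := by
        rw [tsum_geometric_of_lt_one hr0 hr1]
        have : (1 : ℝ) - b / a = (a - b) / a := by field_simp
        rw [this, inv_div]
      linarith [h1, h2 ▸ h1]
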